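/- Let 1 < p < 2 and N ≥ 1. Then for all a, b ∈ ℝ^N not both zero, (|b|^{p−2} b − |a|^{p−2} a) · (b − a) ≥ (p − 1) · |b − a|² / (|b| + |a|)^{2−p}. -/

import Mathlib

open Real

private lemma pow_shift {x p : ℝ} (hx : 0 ≤ x) (q : ℝ) (hq : q ≠ 0) (hpq : p ≠ 0) (h : q + 1 = p) :
    x ^ q * x = x ^ p := by
  rw [← Real.rpow_add_one' hx (by rw [h]; exact hpq), h]

-- Bernoulli-type: A^(p-1) ≤ B^(p-1) + (p-1) * B^(p-2) * (A - B) for 0 ≤ A ≤ B, 0 < B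
private lemma bern {p A B : ℝ} (hp1 : 1 < p) (hp2 : p < 2) (hA : 0 ≤ A) (hB : 0 < B)
    (hAB : A ≤ B) : (p - 1) * (B ^ (p - 2) * (B - A)) ≤ B ^ (p - 1) - A ^ (p - 1) := by
  have hs : (-1 : ℝ) ≤ A / B - 1 := by
    have : 0 ≤ A / B := div_nonneg hA hB.le
    linarith
  have hb := rpow_one_add_le_one_add_mul_self hs (p := p - 1) (by linarith) (by linarith)
  rw [add_sub_cancel] at hb
  have hB1 : (0:ℝ) < B ^ (p - 1) := Real.rpow_pos_of_pos hB _
  have hdiv : (A / B) ^ (p - 1) = A ^ (p - 1) / B ^ (p - 1) := Real.div_rpow hA hB.le _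
  have hmul := mul_le_mul_of_nonneg_right hb hB1.le
  rw [hdiv, div_mul_cancel₀ _ (ne_of_gt hB1)] at hmul
  have hB2 : B ^ (p - 2) * B = B ^ (p - 1) := pow_shift hB.le _ (by linarith) (by linarith) (by ring)
  have : (1 + (p - 1) * (A / B - 1)) * B ^ (p - 1)
      = B ^ (p - 1) + (p - 1) * (B ^ (p - 2) * (A - B)) := by
    rw [← hB2]
    field_simp
  rw [this] at hmul
  linarith

-- endpoint t = A*B, case A ≤ B
private lemma ep1' {p A B : ℝ} (hp1 : 1 < p) (hp2 : p < 2) (hA : 0 ≤ A) (hB : 0 ≤ B)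
    (hS : 0 < A + B) (hAB : A ≤ B) :
    (p - 1) * ((A ^ 2 - 2 * (A * B) + B ^ 2) * (A + B) ^ (p - 2))
      ≤ B ^ p + A ^ p - (B ^ (p - 2) + A ^ (p - 2)) * (A * B) := by
  have hBpos : 0 < B := by linarith
  have h1 : (A + B) ^ (p - 2) ≤ B ^ (p - 2) :=
    Real.rpow_le_rpow_of_nonpos hBpos (by linarith) (by linarith)
  have hb := bern hp1 hp2 hA hBpos hAB
  have h2 : (p - 1) * ((A + B) ^ (p - 2) * (B - A)) ≤ B ^ (p - 1) - A ^ (p - 1) := by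
    have := mul_le_mul_of_nonneg_right h1 (sub_nonneg.2 hAB)
    nlinarith
  have h3 := mul_le_mul_of_nonneg_right h2 (sub_nonneg.2 hAB)
  have hB1 : B ^ (p - 2) * B = B ^ (p - 1) := pow_shift hBpos.le _ (by linarith) (by linarith) (by ring)
  have hB2 : B ^ (p - 1) * B = B ^ p := pow_shift hBpos.le _ (by linarith) (by linarith) (by ring)
  have hA1 : A ^ (p - 2) * A = A ^ (p - 1) := pow_shift hA _ (by linarith) (by linarith) (by ring)
  have hA2 : A ^ (p - 1) * A = A ^ p := pow_shift hA _ (by linarith) (by linarith) (by ring)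
  nlinarith [h3]

private lemma ep1 {p A B : ℝ} (hp1 : 1 < p) (hp2 : p < 2) (hA : 0 ≤ A) (hB : 0 ≤ B)
    (hS : 0 < A + B) :
    (p - 1) * ((A ^ 2 - 2 * (A * B) + B ^ 2) * (A + B) ^ (p - 2))
      ≤ B ^ p + A ^ p - (B ^ (p - 2) + A ^ (p - 2)) * (A * B) := by
  rcases le_total A B with h | h
  · exact ep1' hp1 hp2 hA hB hS h
  · have := ep1' hp1 hp2 hB hA (by linarith) h
    rw [add_comm B A] at this
    nlinarith [this]

-- endpoint t = -(A*B)
private lemma ep2 {p A B : ℝ} (hp1 : 1 < p) (hp2 : p < 2) (hA : 0 ≤ A) (hB : 0 ≤ B)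
    (hS : 0 < A + B) :
    (p - 1) * ((A ^ 2 + 2 * (A * B) + B ^ 2) * (A + B) ^ (p - 2))
      ≤ B ^ p + A ^ p + (B ^ (p - 2) + A ^ (p - 2)) * (A * B) := by
  have key : ∀ x : ℝ, 0 ≤ x → x ≤ A + B → x * (A + B) ^ (p - 2) ≤ x ^ (p - 1) := by
    intro x hx hxS
    rcases hx.eq_or_lt with h0 | h0
    · simp [← h0, Real.zero_rpow (show p - 1 ≠ 0 by linarith)]
    · have h1 : (A + B) ^ (p - 2) ≤ x ^ (p - 2) :=
        Real.rpow_le_rpow_of_nonpos h0 hxS (by linarith)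
      have h2 : x ^ (p - 2) * x = x ^ (p - 1) :=
        pow_shift h0.le _ (by linarith) (by linarith) (by ring)
      nlinarith
  have hkA := key A hA (by linarith)
  have hkB := key B hB (by linarith)
  have hB1 : B ^ (p - 2) * B = B ^ (p - 1) := pow_shift hB _ (by linarith) (by linarith) (by ring)
  have hB2 : B ^ (p - 1) * B = B ^ p := pow_shift hB _ (by linarith) (by linarith) (by ring)
  have hA1 : A ^ (p - 2) * A = A ^ (p - 1) := pow_shift hA _ (by linarith) (by linarith) (by ring)
  have hA2 : A ^ (p - 1) * A = A ^ p := pow_shift hA _ (by linarith) (by linarith) (by ring)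
  -- (p-1)*(A+B)^(p-1) ≤ A^(p-1)+B^(p-1), then multiply by (A+B)
  have hS1 : (A + B) ^ (p - 2) * (A + B) = (A + B) ^ (p - 1) :=
    pow_shift hS.le _ (by linarith) (by linarith) (by ring)
  have hS2 : (A + B) ^ (p - 1) * (A + B) = (A + B) ^ p :=
    pow_shift hS.le _ (by linarith) (by linarith) (by ring)
  have hsub : (A + B) ^ (p - 1) ≤ A ^ (p - 1) + B ^ (p - 1) := by
    nlinarith [hkA, hkB]
  have hfin : (p - 1) * (A + B) ^ (p - 1) ≤ A ^ (p - 1) + B ^ (p - 1) := by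
    have hpos : 0 ≤ (A + B) ^ (p - 1) := (Real.rpow_pos_of_pos hS _).le
    nlinarith
  have hmul := mul_le_mul_of_nonneg_right hfin hS.le
  have e1 : B ^ (p - 2) * (A * B) = B ^ (p - 1) * A := by rw [← hB1]; ring
  have e2 : A ^ (p - 2) * (A * B) = A ^ (p - 1) * B := by rw [← hA1]; ring
  have e3 : (p - 1) * ((A ^ 2 + 2 * (A * B) + B ^ 2) * (A + B) ^ (p - 2))
      = (p - 1) * (A + B) ^ (p - 1) * (A + B) := by rw [← hS1]; ring
  have e4 : (A ^ (p - 1) + B ^ (p - 1)) * (A + B)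
      = A ^ p + A ^ (p - 1) * B + B ^ (p - 1) * A + B ^ p := by rw [← hA2, ← hB2]; ring
  linarith [hmul, e1, e2, e3, e4]

private lemma key_ineq {p A B t : ℝ} (hp1 : 1 < p) (hp2 : p < 2) (hA : 0 ≤ A) (hB : 0 ≤ B)
    (hS : 0 < A + B) (ht : |t| ≤ A * B) :
    (p - 1) * ((A ^ 2 - 2 * t + B ^ 2) * (A + B) ^ (p - 2))
      ≤ B ^ p + A ^ p - (B ^ (p - 2) + A ^ (p - 2)) * t := by
  have ht1 : t ≤ A * B := le_of_abs_le ht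
  have ht2 : -(A * B) ≤ t := neg_le_of_abs_le ht
  rcases le_or_gt 0 ((B ^ (p - 2) + A ^ (p - 2)) - 2 * (p - 1) * (A + B) ^ (p - 2)) with hβ | hβ
  · have h1 := ep1 hp1 hp2 hA hB hS
    nlinarith [mul_nonneg hβ (sub_nonneg.2 ht1)]
  · have h2 := ep2 hp1 hp2 hA hB hS
    nlinarith [mul_nonneg (by linarith : (0:ℝ) ≤ 2 * (p - 1) * (A + B) ^ (p - 2) - (B ^ (p - 2) + A ^ (p - 2))) (by linarith : (0:ℝ) ≤ t + A * B)]

theorem pLaplacian_monotonicity_p_lt_two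
    (p : ℝ) (hp1 : 1 < p) (hp2 : p < 2)
    (N : ℕ) (hN : 1 ≤ N)
    (a b : EuclideanSpace ℝ (Fin N)) (hab : ¬(a = 0 ∧ b = 0)) :
    (p - 1) * (‖b - a‖ ^ 2 / (‖b‖ + ‖a‖) ^ (2 - p))
      ≤ (inner ℝ (‖b‖ ^ (p - 2) • b - ‖a‖ ^ (p - 2) • a) (b - a) : ℝ) := by
  set A := ‖a‖ with hA
  set B := ‖b‖ with hB
  have hA0 : 0 ≤ A := norm_nonneg a
  have hB0 : 0 ≤ B := norm_nonneg b
  have hS : 0 < A + B := by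
    rcases (add_pos_of_pos_of_nonneg · hB0 : 0 < A → _) with _
    by_contra h
    push_neg at h
    have hA' : A = 0 := by linarith
    have hB' : B = 0 := by linarith
    exact hab ⟨norm_eq_zero.mp hA', norm_eq_zero.mp hB'⟩
  have hS' : 0 < B + A := by linarith
  set t : ℝ := inner ℝ a b with htdef
  have ht : |t| ≤ A * B := by
    calc |t| ≤ ‖a‖ * ‖b‖ := abs_real_inner_le_norm a b
    _ = A * B := rfl
  have expand : (inner ℝ (B ^ (p - 2) • b - A ^ (p - 2) • a) (b - a) : ℝ)
      = B ^ (p - 2) * B ^ 2 + A ^ (p - 2) * A ^ 2 - (B ^ (p - 2) + A ^ (p - 2)) * t := by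
    simp only [inner_sub_left, inner_sub_right, real_inner_smul_left,
      real_inner_self_eq_norm_sq, htdef, real_inner_comm b a]
    ring
  have hnorm : ‖b - a‖ ^ 2 = A ^ 2 - 2 * t + B ^ 2 := by
    rw [norm_sub_sq_real, real_inner_comm a b, ← htdef, ← hA, ← hB]
    ring
  have hdiv : ‖b - a‖ ^ 2 / (B + A) ^ (2 - p) = ‖b - a‖ ^ 2 * (B + A) ^ (p - 2) := by
    rw [show (2 - p) = -(p - 2) by ring, Real.rpow_neg (by linarith : (0:ℝ) ≤ B + A),
      div_eq_mul_inv, inv_inv]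
  have hBp : B ^ (p - 2) * B ^ 2 = B ^ p := by
    rcases hB0.eq_or_lt with h0 | h0
    · simp [← h0, Real.zero_rpow (show p - 2 ≠ 0 by linarith),
        Real.zero_rpow (show p ≠ 0 by linarith)]
    · rw [← Real.rpow_natCast B 2, ← Real.rpow_add h0]
      norm_num
  have hAp : A ^ (p - 2) * A ^ 2 = A ^ p := by
    rcases hA0.eq_or_lt with h0 | h0
    · simp [← h0, Real.zero_rpow (show p - 2 ≠ 0 by linarith),
        Real.zero_rpow (show p ≠ 0 by linarith)]
    · rw [← Real.rpow_natCast A 2, ← Real.rpow_add h0]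
      norm_num
  rw [expand, hdiv, hnorm, hBp, hAp, add_comm B A]
  exact key_ineq hp1 hp2 hA0 hB0 hS ht
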